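/- For any closure space B (a set with a closure system, i.e. a family of subsets closed under arbitrary intersections), the map η_B sending a point x to the closure of {x} is continuous from B into the complete lattice of closed sets of B (regarded as a closure space whose closed sets are the principal ideals), and for any continuous map f from B into a complete lattice C (with closed sets the principal ideals of C), there is a unique join-preserving map f^∨ from the lattice of closed sets of B to C with f = f^∨ ∘ η_B. -/

import Mathlib

/-- A closure system: a family of subsets closed under arbitrary intersections. -/
def IsClosureSystem {α : Type*} (𝒞 : Set (Set α)) : Prop :=
  ∀ 𝒮 ⊆ 𝒞, ⋂₀ 𝒮 ∈ 𝒞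

/-- Closure of a set with respect to a closure system. -/
def clOf {α : Type*} (𝒞 : Set (Set α)) (X : Set α) : Set α :=
  ⋂₀ {F | F ∈ 𝒞 ∧ X ⊆ F}

lemma subset_clOf {α : Type*} (𝒞 : Set (Set α)) (X : Set α) : X ⊆ clOf 𝒞 X :=
  fun x hx F hF => hF.2 hx

lemma clOf_subset {α : Type*} {𝒞 : Set (Set α)} {X F : Set α} (hF : F ∈ 𝒞) (h : X ⊆ F) :
    clOf 𝒞 X ⊆ F := fun x hx => hx F ⟨hF, h⟩

lemma sSup_image_clOf {β γ : Type*} [CompleteLattice γ] {𝒞 : Set (Set β)} {f : β → γ}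
    (hf : ∀ c : γ, f ⁻¹' Set.Iic c ∈ 𝒞) (X : Set β) :
    sSup (f '' clOf 𝒞 X) = sSup (f '' X) := by
  apply le_antisymm
  · apply sSup_le
    rintro y ⟨x, hx, rfl⟩
    have hsub : X ⊆ f ⁻¹' Set.Iic (sSup (f '' X)) := fun z hz =>
      le_sSup ⟨z, hz, rfl⟩
    exact clOf_subset (hf _) hsub hx
  · exact sSup_le_sSup (Set.image_mono (f := _) (subset_clOf 𝒞 X))

theorem stmt_5 {β : Type*} (𝒞 : Set (Set β)) (h𝒞 : IsClosureSystem 𝒞)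
    {γ : Type*} [CompleteLattice γ] (f : β → γ)
    (hf : ∀ c : γ, f ⁻¹' Set.Iic c ∈ 𝒞) :
    (∀ F ∈ 𝒞, {x | clOf 𝒞 {x} ⊆ F} ∈ 𝒞) ∧
    ∃ g : Set β → γ,
      (∀ 𝒮 : Set (Set β), (∀ F ∈ 𝒮, F ∈ 𝒞) → g (clOf 𝒞 (⋃₀ 𝒮)) = sSup (g '' 𝒮)) ∧
      (∀ x, g (clOf 𝒞 {x}) = f x) ∧
      ∀ g' : Set β → γ,
        (∀ 𝒮 : Set (Set β), (∀ F ∈ 𝒮, F ∈ 𝒞) → g' (clOf 𝒞 (⋃₀ 𝒮)) = sSup (g' '' 𝒮)) →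
        (∀ x, g' (clOf 𝒞 {x}) = f x) → ∀ F ∈ 𝒞, g' F = g F := by
  constructor
  · intro F hF
    have : {x | clOf 𝒞 {x} ⊆ F} = F := by
      ext x
      constructor
      · intro h
        exact h (subset_clOf 𝒞 {x} rfl)
      · intro h
        exact clOf_subset hF (by simpa using h)
    rw [this]; exact hF
  · refine ⟨fun F => sSup (f '' F), ?_, ?_, ?_⟩
    · intro 𝒮 h𝒮
      dsimp only
      rw [sSup_image_clOf hf]
      apply le_antisymm
      · apply sSup_le
        rintro y ⟨x, hx, rfl⟩
        obtain ⟨F, hF𝒮, hxF⟩ := hx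
        calc f x ≤ sSup (f '' F) := le_sSup ⟨x, hxF, rfl⟩
          _ ≤ _ := le_sSup (Set.mem_image_of_mem (fun G => sSup (f '' G)) hF𝒮)
      · apply sSup_le
        rintro y ⟨F, hF𝒮, rfl⟩
        exact sSup_le_sSup (Set.image_mono (f := _) (Set.subset_sUnion_of_mem hF𝒮))
    · intro x
      dsimp only
      rw [sSup_image_clOf hf]
      simp
    · intro g' hg'1 hg'2 F hF
      set 𝒮 : Set (Set β) := (fun x => clOf 𝒞 {x}) '' F with h𝒮def
      have h𝒮closed : ∀ G ∈ 𝒮, G ∈ 𝒞 := by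
        rintro G ⟨x, _, rfl⟩
        exact h𝒞 _ (fun H hH => hH.1)
      have hUnion : ⋃₀ 𝒮 = F := by
        apply subset_antisymm
        · rintro y ⟨G, ⟨x, hxF, rfl⟩, hyG⟩
          exact clOf_subset hF (by simpa using hxF) hyG
        · intro x hxF
          exact ⟨clOf 𝒞 {x}, ⟨x, hxF, rfl⟩, subset_clOf 𝒞 {x} rfl⟩
      have hclF : clOf 𝒞 F = F :=
        subset_antisymm (clOf_subset hF subset_rfl) (subset_clOf 𝒞 F)
      have himg : g' '' 𝒮 = f '' F := by
        rw [h𝒮def, Set.image_image]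
        exact Set.image_congr fun x _ => hg'2 x
      have := hg'1 𝒮 h𝒮closed
      rw [hUnion, hclF, himg] at this
      exact this
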